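/- Suppose X'X + Δ'Δ = d·I_p with d > 0 and the columns of X satisfy Σ_i x_{ij}² = 1 for each j. Fix λ > 0 and define the lasso OEM sequence by β^{(k+1)}_j = sign(u_j^{(k)})·((|u_j^{(k)}| − λ)₊/d), where u^{(k)} = X'Y + (d·I_p − X'X)β^{(k)}. If the initial point β^{(0)} has grouping coherence, then β^{(k)} converges as k → ∞ to a limit that has grouping coherence. -/

import Mathlib

open Filter Topology Matrix

/-- An estimator `b` has grouping coherence with respect to the regression
matrix `X`: equal columns get equal coefficients and opposite columns get
opposite coefficients. -/
def GroupingCoherence {n p : ℕ} (X : Matrix (Fin n) (Fin p) ℝ)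
    (b : Fin p → ℝ) : Prop :=
  ∀ i j : Fin p,
    ((∀ k, X k i = X k j) → b i = b j) ∧
    ((∀ k, X k i = -X k j) → b i = -b j)

/- ### Auxiliary soft-thresholding lemmas -/

/-- Soft-thresholding in "clamp" form. -/
noncomputable def stm (μ t : ℝ) : ℝ := t - max (min t μ) (-μ)

lemma clamp_mono {μ x y : ℝ} (h : x ≤ y) : max (min x μ) (-μ) ≤ max (min y μ) (-μ) :=
  max_le_max (min_le_min h le_rfl) le_rfl

lemma clamp_lip {μ x y : ℝ} : |max (min x μ) (-μ) - max (min y μ) (-μ)| ≤ |x - y| :=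
  le_trans (abs_max_sub_max_le_abs _ _ _) (by
    calc |min x μ - min y μ| ≤ max |x - y| |μ - μ| := abs_min_sub_min_le_max x μ y μ
    _ = |x - y| := by simp)

lemma stm_fne (μ x y : ℝ) : (stm μ x - stm μ y)^2 ≤ (stm μ x - stm μ y) * (x - y) := by
  rcases le_total x y with h | h
  · have h1 := clamp_mono (μ := μ) h
    have h2 : max (min y μ) (-μ) - max (min x μ) (-μ) ≤ y - x := by
      have := clamp_lip (μ := μ) (x := y) (y := x)
      rw [abs_of_nonneg (by linarith : (0:ℝ) ≤ y - x)] at this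
      exact le_trans (le_abs_self _) this
    simp only [stm]; nlinarith
  · have h1 := clamp_mono (μ := μ) h
    have h2 : max (min x μ) (-μ) - max (min y μ) (-μ) ≤ x - y := by
      have := clamp_lip (μ := μ) (x := x) (y := y)
      rw [abs_of_nonneg (by linarith : (0:ℝ) ≤ x - y)] at this
      exact le_trans (le_abs_self _) this
    simp only [stm]; nlinarith

lemma stm_odd {μ : ℝ} (hμ : 0 ≤ μ) (x : ℝ) : stm μ (-x) = -stm μ x := by
  simp only [stm, min_def, max_def]
  split_ifs <;> (try ring) <;> (try linarith)

lemma soft_eq {d lam : ℝ} (hd : 0 < d) (hlam : 0 ≤ lam) (t : ℝ) :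
    Real.sign t * (max (|t| - lam) 0 / d) = stm (lam / d) (t / d) := by
  have hld : 0 ≤ lam / d := div_nonneg hlam hd.le
  rcases lt_trichotomy t 0 with h | h | h
  · rw [Real.sign_of_neg h, abs_of_neg h]
    simp only [stm, min_def, max_def, ← neg_div, div_le_div_iff_of_pos_right hd]
    split_ifs <;> simp only [div_le_div_iff_of_pos_right hd] at * <;> field_simp <;> linarith
  · simp [h, stm, min_eq_left hld, max_eq_left (by linarith : -(lam/d) ≤ (0:ℝ))]
  · rw [Real.sign_of_pos h, abs_of_pos h]
    simp only [stm, min_def, max_def, ← neg_div, div_le_div_iff_of_pos_right hd]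
    split_ifs <;> simp only [div_le_div_iff_of_pos_right hd] at * <;> field_simp <;> linarith

lemma oneD {d lam z g : ℝ} (hd : 0 < d) (hlam : 0 < lam)
    (H : ∀ t, 0 ≤ (1/2) * (t - z)^2 + (t - z) * g + lam * (|t| - |z|)) :
    stm (lam / d) ((d * z - g) / d) = z := by
  rcases lt_trichotomy z 0 with hz | hz | hz
  · have hg1 : g - lam ≤ 0 := by
      by_contra hc
      push_neg at hc
      have h1 := H (z - (g - lam))
      rw [abs_of_neg (by linarith), abs_of_neg hz] at h1
      nlinarith
    have hg2 : 0 ≤ g - lam := by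
      by_contra hc
      push_neg at hc
      set ε := min (-z) (lam - g) with hε
      have hε1 : 0 < ε := lt_min (by linarith) (by linarith)
      have hε2 : ε ≤ -z := min_le_left _ _
      have hε3 : ε ≤ lam - g := min_le_right _ _
      have h1 := H (z + ε)
      rw [abs_of_nonpos (by linarith), abs_of_neg hz] at h1
      nlinarith
    have hg : g = lam := by linarith
    have hw : (d * z - g) / d = z - lam / d := by field_simp [hg]; linarith
    have hμ : 0 < lam / d := div_pos hlam hd
    rw [stm, hw, min_eq_left (by linarith), max_eq_right (by linarith)]
    ring
  · subst hz
    have hg1 : g ≤ lam := by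
      by_contra hc
      push_neg at hc
      have h1 := H (-(g - lam))
      rw [abs_of_neg (by linarith)] at h1
      simp only [abs_zero, sub_zero] at h1
      nlinarith
    have hg2 : -lam ≤ g := by
      by_contra hc
      push_neg at hc
      have h1 := H (-(g + lam))
      rw [abs_of_pos (by linarith)] at h1
      simp only [abs_zero, sub_zero] at h1
      nlinarith
    have hw : (d * 0 - g) / d = -g / d := by ring_nf
    rw [stm, hw, min_eq_left (by rw [div_le_div_iff_of_pos_right hd]; linarith),
      max_eq_left (by rw [neg_div, neg_le_neg_iff, div_le_div_iff_of_pos_right hd]; linarith)]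
    ring
  · have hg1 : 0 ≤ g + lam := by
      by_contra hc
      push_neg at hc
      have h1 := H (z - (g + lam))
      rw [abs_of_pos (by linarith), abs_of_pos hz] at h1
      nlinarith
    have hg2 : g + lam ≤ 0 := by
      by_contra hc
      push_neg at hc
      set ε := min z (g + lam) with hε
      have hε1 : 0 < ε := lt_min hz (by linarith)
      have hε2 : ε ≤ z := min_le_left _ _
      have hε3 : ε ≤ g + lam := min_le_right _ _
      have h1 := H (z - ε)
      rw [abs_of_nonneg (by linarith), abs_of_pos hz] at h1
      nlinarith
    have hg : g = -lam := by linarith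
    have hw : (d * z - g) / d = z + lam / d := by field_simp [hg]; linarith
    have hμ : 0 < lam / d := div_pos hlam hd
    rw [stm, hw, min_eq_right (by linarith), max_eq_left (by linarith)]
    ring

/- ### Auxiliary dot-product lemmas -/

lemma dot_self_nonneg' {q : ℕ} (u : Fin q → ℝ) : 0 ≤ u ⬝ᵥ u :=
  Finset.sum_nonneg fun _ _ => mul_self_nonneg _

lemma sq_le_dot_self {q : ℕ} (u : Fin q → ℝ) (j : Fin q) : (u j)^2 ≤ u ⬝ᵥ u := by
  have : (u j) * (u j) ≤ u ⬝ᵥ u :=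
    Finset.single_le_sum (fun i _ => mul_self_nonneg (u i)) (Finset.mem_univ j)
  nlinarith

lemma dot_sq_le {q : ℕ} (u v : Fin q → ℝ) : (u ⬝ᵥ v)^2 ≤ (u ⬝ᵥ u) * (v ⬝ᵥ v) := by
  have := Finset.sum_mul_sq_le_sq_mul_sq Finset.univ u v
  simpa [dotProduct, sq] using this

lemma cert_identity {q : ℕ} (a t g : Fin q → ℝ) :
    2*(a ⬝ᵥ a) - 2*(t ⬝ᵥ t) - ((t - a) ⬝ᵥ (t - a)) =
    4*((t ⬝ᵥ g) - (t ⬝ᵥ t)) + 4*((g ⬝ᵥ a) - (g ⬝ᵥ g))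
      + ((a + t - (2:ℝ) • g) ⬝ᵥ (a + t - (2:ℝ) • g)) := by
  simp only [dotProduct, Pi.sub_apply, Pi.add_apply, Pi.smul_apply, smul_eq_mul,
    Finset.mul_sum, ← Finset.sum_sub_distrib, ← Finset.sum_add_distrib]
  apply Finset.sum_congr rfl
  intros; ring

lemma fejer_abstract {q : ℕ} {a t g : Fin q → ℝ}
    (h1 : t ⬝ᵥ t ≤ t ⬝ᵥ g) (h2 : g ⬝ᵥ g ≤ g ⬝ᵥ a) :
    2*(t ⬝ᵥ t) + ((t - a) ⬝ᵥ (t - a)) ≤ 2*(a ⬝ᵥ a) := by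
  have := cert_identity a t g
  have hnn := dot_self_nonneg' (a + t - (2:ℝ) • g)
  linarith

lemma nonexp_abstract {q : ℕ} {a t g : Fin q → ℝ}
    (h1 : t ⬝ᵥ t ≤ t ⬝ᵥ g) (h2 : g ⬝ᵥ g ≤ g ⬝ᵥ a) :
    t ⬝ᵥ t ≤ a ⬝ᵥ a := by
  have c1 := dot_sq_le t g
  have c2 := dot_sq_le g a
  have n1 := dot_self_nonneg' t
  have n2 := dot_self_nonneg' g
  have n3 := dot_self_nonneg' a
  have htg : t ⬝ᵥ t ≤ g ⬝ᵥ g := by nlinarith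
  nlinarith

lemma adj_dot {q r : ℕ} (M : Matrix (Fin r) (Fin q) ℝ) (u : Fin r → ℝ) (w : Fin q → ℝ) :
    (Mᵀ.mulVec u) ⬝ᵥ w = u ⬝ᵥ (M.mulVec w) := by
  rw [dotProduct_mulVec, Matrix.mulVec_transpose]

lemma tendsto_of_sq_le {x c : ℕ → ℝ} {L : ℝ} (h : ∀ k, (x k - L)^2 ≤ c k)
    (hc : Tendsto c atTop (𝓝 0)) : Tendsto x atTop (𝓝 L) := by
  rw [tendsto_iff_dist_tendsto_zero]
  have hs : Tendsto (fun k => Real.sqrt (c k)) atTop (𝓝 0) := by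
    have := (Real.continuous_sqrt.tendsto 0).comp hc
    simpa [Function.comp_def] using this
  apply squeeze_zero (fun k => dist_nonneg) (fun k => ?_) hs
  rw [Real.dist_eq, ← Real.sqrt_sq_eq_abs]
  exact Real.sqrt_le_sqrt (h k)

/-- Theorem 7, grouping coherence of the lasso OEM limit.
Suppose `XᵀX + ΔᵀΔ = d·I_p` with `d > 0` and the columns of `X` are
standardized (`∑ᵢ x_{ij}² = 1`).  If the initial value of the lasso OEM
sequence has grouping coherence, then the sequence converges to a limit that
has grouping coherence. -/
theorem stmt10 {n m p : ℕ} (X : Matrix (Fin n) (Fin p) ℝ) (Y : Fin n → ℝ)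
    (Δ : Matrix (Fin m) (Fin p) ℝ) (d lam : ℝ) (hd : 0 < d) (hlam : 0 < lam)
    (hXΔ : Xᵀ * X + Δᵀ * Δ = d • (1 : Matrix (Fin p) (Fin p) ℝ))
    (hstand : ∀ j, ∑ i, (X i j) ^ 2 = 1)
    (βs : ℕ → Fin p → ℝ)
    (hrec : ∀ k j, βs (k + 1) j =
      Real.sign ((Xᵀ.mulVec Y
          + (d • (1 : Matrix (Fin p) (Fin p) ℝ) - Xᵀ * X).mulVec (βs k)) j) *
        (max (|(Xᵀ.mulVec Y
          + (d • (1 : Matrix (Fin p) (Fin p) ℝ) - Xᵀ * X).mulVec (βs k)) j| - lam) 0 / d))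
    (h0 : GroupingCoherence X (βs 0)) :
    ∃ bstar : Fin p → ℝ, Tendsto βs atTop (𝓝 bstar) ∧ GroupingCoherence X bstar := by
  set μ : ℝ := lam / d with hμdef
  have hμ : 0 ≤ μ := div_nonneg hlam.le hd.le
  set c : Fin p → ℝ := Xᵀ.mulVec Y with hc
  set A : Matrix (Fin p) (Fin p) ℝ := d • (1 : Matrix (Fin p) (Fin p) ℝ) - Xᵀ * X with hAdef
  have hA : A = Δᵀ * Δ := by rw [hAdef, ← hXΔ]; abel
  set G : (Fin p → ℝ) → (Fin p → ℝ) := fun b => d⁻¹ • (c + A.mulVec b) with hG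
  set T : (Fin p → ℝ) → (Fin p → ℝ) := fun b j => stm μ (G b j) with hT
  -- the recursion is exactly `T`
  have hrec' : ∀ k, βs (k + 1) = T (βs k) := by
    intro k
    funext j
    rw [hrec k j, soft_eq hd hlam.le]
    simp only [hT, hG, Pi.smul_apply, smul_eq_mul]
    rw [hμdef]
    simp only [div_eq_inv_mul]
  -- difference formula for G
  have hGdiff : ∀ b b', G b - G b' = d⁻¹ • (A.mulVec (b - b')) := by
    intro b b'
    funext j
    simp only [hG, Pi.sub_apply, Pi.smul_apply, smul_eq_mul, Pi.add_apply,
      Matrix.mulVec_sub]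
    try ring
  -- key spectral bound : ‖Δᵀ v‖² ≤ d ‖v‖²
  have hΔΔ : ∀ u : Fin p → ℝ, ((Δᵀ * Δ).mulVec u) ⬝ᵥ u = (Δ.mulVec u) ⬝ᵥ (Δ.mulVec u) := by
    intro u
    rw [← Matrix.mulVec_mulVec, adj_dot]
  have hΔbd : ∀ u : Fin p → ℝ, (Δ.mulVec u) ⬝ᵥ (Δ.mulVec u) ≤ d * (u ⬝ᵥ u) := by
    intro u
    have h1 : ((Δᵀ * Δ).mulVec u) ⬝ᵥ u = d * (u ⬝ᵥ u) - ((Xᵀ * X).mulVec u) ⬝ᵥ u := by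
      rw [← hA, hAdef, Matrix.sub_mulVec, sub_dotProduct, Matrix.smul_mulVec,
        Matrix.one_mulVec, smul_dotProduct, smul_eq_mul]
    have h2 : ((Xᵀ * X).mulVec u) ⬝ᵥ u = (X.mulVec u) ⬝ᵥ (X.mulVec u) := by
      rw [← Matrix.mulVec_mulVec, adj_dot]
    have h3 := dot_self_nonneg' (X.mulVec u)
    rw [← hΔΔ, h1]
    linarith
  have hL1 : ∀ v : Fin m → ℝ,
      (Δᵀ.mulVec v) ⬝ᵥ (Δᵀ.mulVec v) ≤ d * (v ⬝ᵥ v) := by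
    intro v
    have e1 : (Δᵀ.mulVec v) ⬝ᵥ (Δᵀ.mulVec v) = v ⬝ᵥ (Δ.mulVec (Δᵀ.mulVec v)) :=
      adj_dot Δ v _
    have cs := dot_sq_le v (Δ.mulVec (Δᵀ.mulVec v))
    rw [← e1] at cs
    have e2 := hΔbd (Δᵀ.mulVec v)
    have n1 := dot_self_nonneg' (Δᵀ.mulVec v)
    have n2 := dot_self_nonneg' v
    nlinarith [cs, e2, n1, n2, hd.le, mul_nonneg hd.le n2]
  -- firm nonexpansiveness of G
  have hGfne : ∀ b b', (G b - G b') ⬝ᵥ (G b - G b') ≤ (G b - G b') ⬝ᵥ (b - b') := by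
    intro b b'
    rw [hGdiff]
    set w := b - b' with hw
    have hAw : A.mulVec w = Δᵀ.mulVec (Δ.mulVec w) := by rw [hA, ← Matrix.mulVec_mulVec]
    rw [hAw]
    have hdi : (0:ℝ) ≤ d⁻¹ := inv_nonneg.mpr hd.le
    rw [smul_dotProduct, dotProduct_smul, smul_dotProduct, smul_eq_mul,
      smul_eq_mul, smul_eq_mul]
    have key : (Δᵀ.mulVec (Δ.mulVec w)) ⬝ᵥ (Δᵀ.mulVec (Δ.mulVec w)) ≤ d * ((Δᵀ.mulVec (Δ.mulVec w)) ⬝ᵥ w) := by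
      have := hL1 (Δ.mulVec w)
      have e : (Δᵀ.mulVec (Δ.mulVec w)) ⬝ᵥ w = (Δ.mulVec w) ⬝ᵥ (Δ.mulVec w) := adj_dot _ _ _
      rw [e]
      exact this
    calc d⁻¹ * (d⁻¹ * ((Δᵀ.mulVec (Δ.mulVec w)) ⬝ᵥ (Δᵀ.mulVec (Δ.mulVec w))))
        = (d⁻¹ * d⁻¹) * ((Δᵀ.mulVec (Δ.mulVec w)) ⬝ᵥ (Δᵀ.mulVec (Δ.mulVec w))) := by ring
      _ ≤ (d⁻¹ * d⁻¹) * (d * ((Δᵀ.mulVec (Δ.mulVec w)) ⬝ᵥ w)) :=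
          mul_le_mul_of_nonneg_left key (by positivity)
      _ = d⁻¹ * ((Δᵀ.mulVec (Δ.mulVec w)) ⬝ᵥ w) := by field_simp
  -- firm nonexpansiveness of the soft-thresholding step
  have hTfne : ∀ b b', (T b - T b') ⬝ᵥ (T b - T b') ≤ (T b - T b') ⬝ᵥ (G b - G b') := by
    intro b b'
    simp only [dotProduct, Pi.sub_apply]
    apply Finset.sum_le_sum
    intro j _
    have := stm_fne μ (G b j) (G b' j)
    simp only [hT]
    nlinarith [this]
  -- Fejér monotonicity with respect to any fixed point
  have hFej : ∀ zz, T zz = zz → ∀ b,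
      2*((T b - zz) ⬝ᵥ (T b - zz)) + ((T b - b) ⬝ᵥ (T b - b)) ≤ 2*((b - zz) ⬝ᵥ (b - zz)) := by
    intro zz hzz b
    have h1 : (T b - zz) ⬝ᵥ (T b - zz) ≤ (T b - zz) ⬝ᵥ (G b - G zz) := by
      have := hTfne b zz
      rwa [hzz] at this
    have h2 := hGfne b zz
    have := fejer_abstract h1 h2
    have he : T b - zz - (b - zz) = T b - b := sub_sub_sub_cancel_right _ _ _
    rwa [he] at this
  have hTne : ∀ b b', (T b - T b') ⬝ᵥ (T b - T b') ≤ (b - b') ⬝ᵥ (b - b') := by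
    intro b b'
    exact nonexp_abstract (hTfne b b') (hGfne b b')
  -- objective function and existence of a fixed point
  set F : (Fin p → ℝ) → ℝ :=
    fun b => (1/2) * ∑ i, ((∑ l, X i l * b l) - Y i)^2 + lam * ∑ l, |b l| with hF
  have hFc : Continuous F := by
    apply Continuous.add
    · exact continuous_const.mul (continuous_finset_sum _ fun i _ =>
        ((continuous_finset_sum _ fun l _ => continuous_const.mul (continuous_apply l)).sub
          continuous_const).pow 2)
    · exact continuous_const.mul (continuous_finset_sum _ fun l _ => (continuous_apply l).abs)
  have hF0 : 0 ≤ F 0 := by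
    simp only [hF, Pi.zero_apply, mul_zero, abs_zero, Finset.sum_const_zero, mul_zero, add_zero]
    positivity
  have hFlb : ∀ b, lam * ‖b‖ ≤ F b := by
    intro b
    have h1 : ‖b‖ ≤ ∑ l, |b l| := by
      rw [pi_norm_le_iff_of_nonneg (Finset.sum_nonneg fun l _ => abs_nonneg _)]
      intro j
      rw [Real.norm_eq_abs]
      exact Finset.single_le_sum (fun l _ => abs_nonneg (b l)) (Finset.mem_univ j)
    have h2 : 0 ≤ (1/2) * ∑ i, ((∑ l, X i l * b l) - Y i)^2 := by positivity
    have := mul_le_mul_of_nonneg_left h1 hlam.le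
    simp only [hF]
    linarith
  obtain ⟨z, hzmem, hzmin⟩ :
      ∃ z ∈ Metric.closedBall (0 : Fin p → ℝ) (F 0 / lam + 1),
        IsMinOn F (Metric.closedBall (0 : Fin p → ℝ) (F 0 / lam + 1)) z := by
    refine (isCompact_closedBall _ _).exists_isMinOn ⟨0, ?_⟩ hFc.continuousOn
    simp [Metric.mem_closedBall]
    positivity
  have hglob : ∀ b, F z ≤ F b := by
    intro b
    by_cases hb : b ∈ Metric.closedBall (0 : Fin p → ℝ) (F 0 / lam + 1)
    · exact hzmin hb
    · have hnb : F 0 / lam + 1 < ‖b‖ := by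
        simp only [Metric.mem_closedBall, dist_zero_right, not_le] at hb
        exact hb
      have h1 : F 0 < lam * ‖b‖ := by
        have : lam * (F 0 / lam + 1) < lam * ‖b‖ := by
          exact mul_lt_mul_of_pos_left hnb hlam
        rw [mul_add, mul_div_cancel₀ _ hlam.ne', mul_one] at this
        linarith
      have h2 := hFlb b
      have h3 : F z ≤ F 0 := hzmin (by simp [Metric.mem_closedBall]; positivity)
      linarith
  -- z is a fixed point of T
  have hfix : T z = z := by
    funext j
    -- one-dimensional optimality at coordinate j
    set gj : ℝ := ∑ i, X i j * ((∑ l, X i l * z l) - Y i) with hgj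
    have H : ∀ t, 0 ≤ (1/2) * (t - z j)^2 + (t - z j) * gj + lam * (|t| - |z j|) := by
      intro t
      have hmin := hglob (Function.update z j t)
      have hupd : ∀ i, (∑ l, X i l * Function.update z j t l)
          = (∑ l, X i l * z l) + X i j * (t - z j) := by
        intro i
        have : ∀ l, X i l * Function.update z j t l
            = X i l * z l + (if l = j then X i j * (t - z j) else 0) := by
          intro l
          rcases eq_or_ne l j with rfl | h
          · simp [Function.update_self]; ring
          · simp [Function.update_of_ne h, h]
        rw [Finset.sum_congr rfl fun l _ => this l, Finset.sum_add_distrib,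
          Finset.sum_ite_eq' Finset.univ j (fun _ => X i j * (t - z j))]
        simp
      have habs : (∑ l, |Function.update z j t l|) = (∑ l, |z l|) + (|t| - |z j|) := by
        have : ∀ l, |Function.update z j t l|
            = |z l| + (if l = j then |t| - |z j| else 0) := by
          intro l
          rcases eq_or_ne l j with rfl | h
          · simp [Function.update_self]
          · simp [Function.update_of_ne h, h]
        rw [Finset.sum_congr rfl fun l _ => this l, Finset.sum_add_distrib,
          Finset.sum_ite_eq' Finset.univ j (fun _ => |t| - |z j|)]
        simp
      have hexp : ∑ i, ((∑ l, X i l * z l) + X i j * (t - z j) - Y i)^2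
          = (∑ i, ((∑ l, X i l * z l) - Y i)^2) + (2*(t - z j)) * gj
            + (t - z j)^2 * (∑ i, (X i j)^2) := by
        rw [hgj, Finset.mul_sum, Finset.mul_sum, ← Finset.sum_add_distrib,
          ← Finset.sum_add_distrib]
        apply Finset.sum_congr rfl
        intros; ring
      have hFt : F (Function.update z j t)
          = F z + ((1/2) * (t - z j)^2 + (t - z j) * gj + lam * (|t| - |z j|)) := by
        simp only [hF]
        rw [Finset.sum_congr rfl fun i _ => by rw [hupd i], hexp, habs, hstand j]
        ring
      rw [hFt] at hmin
      linarith
    have h1D := oneD hd hlam H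
    -- identify G z j
    have hGz : G z j = (d * z j - gj) / d := by
      simp only [hG, Pi.smul_apply, smul_eq_mul, Pi.add_apply]
      have hAz : A.mulVec z j = d * z j - ∑ i, X i j * (∑ l, X i l * z l) := by
        rw [hAdef]
        rw [Matrix.sub_mulVec]
        simp only [Pi.sub_apply, Matrix.smul_mulVec, Matrix.one_mulVec, Pi.smul_apply,
          smul_eq_mul]
        congr 1
        rw [← Matrix.mulVec_mulVec]
        simp [Matrix.mulVec, dotProduct, Matrix.transpose_apply]
      have hcz : c j = ∑ i, X i j * Y i := by
        simp [hc, Matrix.mulVec, dotProduct, Matrix.transpose_apply]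
      rw [hAz, hcz, div_eq_inv_mul]
      congr 1
      rw [hgj]
      rw [Finset.sum_congr rfl (fun i _ => by ring : ∀ i ∈ Finset.univ,
        X i j * ((∑ l, X i l * z l) - Y i) = X i j * (∑ l, X i l * z l) - X i j * Y i),
        Finset.sum_sub_distrib]
      ring
    simp only [hT]
    rw [hGz, h1D]
  -- Fejér sequence with respect to z
  set a : ℕ → ℝ := fun k => (βs k - z) ⬝ᵥ (βs k - z) with ha
  have hstep : ∀ k, 2 * a (k+1) + ((βs (k+1) - βs k) ⬝ᵥ (βs (k+1) - βs k)) ≤ 2 * a k := by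
    intro k
    have := hFej z hfix (βs k)
    rw [← hrec' k] at this
    exact this
  have hanti : Antitone a := antitone_nat_of_succ_le (by
    intro k
    have h1 := hstep k
    have h2 := dot_self_nonneg' (βs (k+1) - βs k)
    linarith)
  have hann : ∀ k, 0 ≤ a k := fun k => dot_self_nonneg' _
  -- boundedness
  have hbd : ∀ k j, (βs k j - z j)^2 ≤ a 0 := by
    intro k j
    have h1 : (βs k j - z j)^2 ≤ a k := by
      have := sq_le_dot_self (βs k - z) j
      simpa only [Pi.sub_apply] using this
    exact le_trans h1 (hanti (Nat.zero_le k))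
  set R : ℝ := ‖z‖ + Real.sqrt (a 0) with hR
  have hmemball : ∀ k, βs k ∈ Metric.closedBall (0 : Fin p → ℝ) R := by
    intro k
    rw [Metric.mem_closedBall, dist_zero_right]
    rw [pi_norm_le_iff_of_nonneg (by positivity)]
    intro j
    rw [Real.norm_eq_abs]
    have h1 : |βs k j - z j| ≤ Real.sqrt (a 0) := by
      rw [← Real.sqrt_sq_eq_abs]
      exact Real.sqrt_le_sqrt (hbd k j)
    have h2 : |z j| ≤ ‖z‖ := by
      have := norm_le_pi_norm z j
      rwa [Real.norm_eq_abs] at this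
    calc |βs k j| = |z j + (βs k j - z j)| := by ring_nf
    _ ≤ |z j| + |βs k j - z j| := abs_add_le _ _
    _ ≤ ‖z‖ + Real.sqrt (a 0) := add_le_add h2 h1
  obtain ⟨w, -, φ, hφ, hsub⟩ :=
    tendsto_subseq_of_bounded Metric.isBounded_closedBall hmemball
  have hsubj : ∀ j, Tendsto (fun k => βs (φ k) j) atTop (𝓝 (w j)) := by
    intro j
    exact tendsto_pi_nhds.mp hsub j
  -- the successive differences tend to zero
  have hconva : Tendsto a atTop (𝓝 (⨅ k, a k)) :=
    tendsto_atTop_ciInf hanti ⟨0, by rintro x ⟨k, rfl⟩; exact hann k⟩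
  have hconva' : Tendsto (fun k => a (k+1)) atTop (𝓝 (⨅ k, a k)) :=
    hconva.comp (tendsto_add_atTop_nat 1)
  have hdiff0 : Tendsto (fun k => (βs (k+1) - βs k) ⬝ᵥ (βs (k+1) - βs k)) atTop (𝓝 0) := by
    have hg : Tendsto (fun k => 2 * (a k - a (k+1))) atTop (𝓝 0) := by
      have := ((hconva.sub hconva').const_mul (2:ℝ))
      simpa using this
    apply squeeze_zero (fun k => dot_self_nonneg' _) (fun k => ?_) hg
    have := hstep k
    linarith
  have hcoorddiff : ∀ j, Tendsto (fun k => βs (k+1) j - βs k j) atTop (𝓝 0) := by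
    intro j
    apply tendsto_of_sq_le (c := fun k => (βs (k+1) - βs k) ⬝ᵥ (βs (k+1) - βs k))
      (fun k => ?_) hdiff0
    have := sq_le_dot_self (βs (k+1) - βs k) j
    simpa using this
  -- w is a fixed point of T
  have hN2sub : Tendsto (fun k => (βs (φ k) - w) ⬝ᵥ (βs (φ k) - w)) atTop (𝓝 0) := by
    have : ∀ j : Fin p, Tendsto (fun k => (βs (φ k) j - w j) * (βs (φ k) j - w j))
        atTop (𝓝 0) := by
      intro j
      have h := (hsubj j).sub_const (w j)
      simpa using h.mul h
    have hsum := tendsto_finset_sum Finset.univ (fun j _ => this j)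
    simpa [dotProduct, Pi.sub_apply] using hsum
  have hfixw : T w = w := by
    funext j
    have h1 : Tendsto (fun k => T (βs (φ k)) j) atTop (𝓝 (T w j)) := by
      apply tendsto_of_sq_le (c := fun k => (βs (φ k) - w) ⬝ᵥ (βs (φ k) - w))
        (fun k => ?_) hN2sub
      have hs := sq_le_dot_self (T (βs (φ k)) - T w) j
      simp only [Pi.sub_apply] at hs
      exact le_trans hs (hTne (βs (φ k)) w)
    have h2 : Tendsto (fun k => T (βs (φ k)) j) atTop (𝓝 (w j)) := by
      have he : ∀ k, T (βs (φ k)) j = βs (φ k) j + (βs (φ k + 1) j - βs (φ k) j) := by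
        intro k
        rw [← hrec' (φ k)]
        ring
      rw [show (fun k => T (βs (φ k)) j) = fun k => βs (φ k) j + (βs (φ k + 1) j - βs (φ k) j)
        from funext he]
      have hz2 : Tendsto (fun k => βs (φ k + 1) j - βs (φ k) j) atTop (𝓝 0) :=
        (hcoorddiff j).comp hφ.tendsto_atTop
      simpa using (hsubj j).add hz2
    exact tendsto_nhds_unique h1 h2
  -- Fejér with respect to w gives convergence of the whole sequence
  set a' : ℕ → ℝ := fun k => (βs k - w) ⬝ᵥ (βs k - w) with ha'
  have hanti' : Antitone a' := antitone_nat_of_succ_le (by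
    intro k
    have h1 := hFej w hfixw (βs k)
    rw [← hrec' k] at h1
    have h2 := dot_self_nonneg' (βs (k+1) - βs k)
    simp only [ha']
    linarith)
  have hconva2 : Tendsto a' atTop (𝓝 (⨅ k, a' k)) :=
    tendsto_atTop_ciInf hanti' ⟨0, by rintro x ⟨k, rfl⟩; exact dot_self_nonneg' _⟩
  have hiInf0 : (⨅ k, a' k) = 0 :=
    tendsto_nhds_unique (hconva2.comp hφ.tendsto_atTop) hN2sub
  have ha'0 : Tendsto a' atTop (𝓝 0) := hiInf0 ▸ hconva2
  have hmain : Tendsto βs atTop (𝓝 w) := by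
    rw [tendsto_pi_nhds]
    intro j
    apply tendsto_of_sq_le (c := a') (fun k => ?_) ha'0
    have := sq_le_dot_self (βs k - w) j
    simpa only [Pi.sub_apply] using this
  -- grouping coherence of the limit
  have hGCstep : ∀ b, GroupingCoherence X b → GroupingCoherence X (T b) := by
    intro b hb i j
    have hAi : ∀ i', (A.mulVec b) i' = d * b i' - ∑ l, (∑ k, X k i' * X k l) * b l := by
      intro i'
      rw [hAdef, Matrix.sub_mulVec]
      simp only [Pi.sub_apply, Matrix.smul_mulVec, Matrix.one_mulVec, Pi.smul_apply,
        smul_eq_mul]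
      congr 1
      all_goals simp [Matrix.mulVec, dotProduct, Matrix.mul_apply, Matrix.transpose_apply]
    have hci : ∀ i', c i' = ∑ k, X k i' * Y k := by
      intro i'
      simp [hc, Matrix.mulVec, dotProduct, Matrix.transpose_apply]
    constructor
    · intro hcol
      have hbij := (hb i j).1 hcol
      have hGij : G b i = G b j := by
        simp only [hG, Pi.smul_apply, smul_eq_mul, Pi.add_apply]
        rw [hAi i, hAi j, hci i, hci j, hbij]
        have e1 : (∑ k, X k i * Y k) = ∑ k, X k j * Y k :=
          Finset.sum_congr rfl fun k _ => by rw [hcol k]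
        have e3 : (∑ l, (∑ k, X k i * X k l) * b l) = ∑ l, (∑ k, X k j * X k l) * b l := by
          refine Finset.sum_congr rfl fun l _ => ?_
          have e2 : (∑ k, X k i * X k l) = ∑ k, X k j * X k l :=
            Finset.sum_congr rfl fun k _ => by rw [hcol k]
          rw [e2]
        rw [e1, e3]
      simp only [hT, hGij]
    · intro hcol
      have hbij := (hb i j).2 hcol
      have hGij : G b i = -G b j := by
        simp only [hG, Pi.smul_apply, smul_eq_mul, Pi.add_apply]
        rw [hAi i, hAi j, hci i, hci j, hbij]
        have e1 : (∑ k, X k i * Y k) = -∑ k, X k j * Y k := by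
          rw [← Finset.sum_neg_distrib]
          exact Finset.sum_congr rfl fun k _ => by rw [hcol k]; ring
        have e2 : ∀ l, (∑ k, X k i * X k l) = -∑ k, X k j * X k l := by
          intro l
          rw [← Finset.sum_neg_distrib]
          exact Finset.sum_congr rfl fun k _ => by rw [hcol k]; ring
        have e3 : (∑ l, (∑ k, X k i * X k l) * b l) = -∑ l, (∑ k, X k j * X k l) * b l := by
          rw [← Finset.sum_neg_distrib]
          exact Finset.sum_congr rfl fun l _ => by rw [e2 l]; ring
        rw [e1, e3]
        ring
      simp only [hT]
      rw [hGij, stm_odd hμ]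
  have hGCall : ∀ k, GroupingCoherence X (βs k) := by
    intro k
    induction k with
    | zero => exact h0
    | succ k ih => rw [hrec' k]; exact hGCstep _ ih
  refine ⟨w, hmain, ?_⟩
  intro i j
  constructor
  · intro hcol
    have h1 : Tendsto (fun k => βs k i) atTop (𝓝 (w i)) := tendsto_pi_nhds.mp hmain i
    have h2 : Tendsto (fun k => βs k i) atTop (𝓝 (w j)) := by
      have h3 : Tendsto (fun k => βs k j) atTop (𝓝 (w j)) := tendsto_pi_nhds.mp hmain j
      have : (fun k => βs k i) = fun k => βs k j :=
        funext fun k => (hGCall k i j).1 hcol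
      rw [this]
      exact h3
    exact tendsto_nhds_unique h1 h2
  · intro hcol
    have h1 : Tendsto (fun k => βs k i) atTop (𝓝 (w i)) := tendsto_pi_nhds.mp hmain i
    have h2 : Tendsto (fun k => βs k i) atTop (𝓝 (-w j)) := by
      have h3 : Tendsto (fun k => -βs k j) atTop (𝓝 (-w j)) :=
        (tendsto_pi_nhds.mp hmain j).neg
      have : (fun k => βs k i) = fun k => -βs k j :=
        funext fun k => (hGCall k i j).2 hcol
      rw [this]
      exact h3
    exact tendsto_nhds_unique h1 h2
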